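/- Let X be a finite set, N ≥ 2, c : X^N → ℝ a cost, and γ a probability measure on X^N that is c-cyclically monotone. Then γ is optimal: for every probability measure γ' on X^N with the same N marginals as γ, ∫ c dγ ≤ ∫ c dγ'. -/

import Mathlib

open MeasureTheory

section Density

lemma factor_through {V W : Type*} [AddCommGroup V] [Module ℚ V] [AddCommGroup W] [Module ℚ W]
    (L : V →ₗ[ℚ] W) (f : V →ₗ[ℚ] ℚ) (h : ∀ v, L v = 0 → f v = 0) :
    ∃ g : W →ₗ[ℚ] ℚ, ∀ v, g (L v) = f v := by
  have h' : LinearMap.ker L ≤ LinearMap.ker f := fun v hv => h v hv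
  let g0 : ↥(LinearMap.range L) →ₗ[ℚ] ℚ :=
    ((LinearMap.ker L).liftQ f h').comp L.quotKerEquivRange.symm.toLinearMap
  obtain ⟨g, hg⟩ := LinearMap.exists_extend g0
  refine ⟨g, fun v => ?_⟩
  have h2 : g (L v) = g0 ⟨L v, LinearMap.mem_range_self L v⟩ := by
    rw [← hg]; rfl
  rw [h2]
  simp only [g0, LinearMap.comp_apply, LinearEquiv.coe_coe, LinearEquiv.coe_toLinearMap]
  rw [LinearMap.quotKerEquivRange_symm_apply_image]
  erw [Submodule.liftQ_apply]

variable {n K : Type*} [Fintype n] [Fintype K]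

/-- A rational row functional. -/
noncomputable def rowLin (r : n → ℚ) : (n → ℚ) →ₗ[ℚ] ℚ where
  toFun q := ∑ j, r j * q j
  map_add' x y := by simp [mul_add, Finset.sum_add_distrib]
  map_smul' c x := by
    simp only [Pi.smul_apply, smul_eq_mul, RingHom.id_apply, Finset.mul_sum]
    exact Finset.sum_congr rfl fun j _ => by ring

/-- The rational linear map given by a rational matrix. -/
noncomputable def matLin (M : K → n → ℚ) : (n → ℚ) →ₗ[ℚ] (K → ℚ) where
  toFun q := fun k => ∑ j, M k j * q j
  map_add' x y := by ext k; simp [mul_add, Finset.sum_add_distrib]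
  map_smul' r x := by
    ext k; simp only [Pi.smul_apply, smul_eq_mul, RingHom.id_apply, Finset.mul_sum]
    exact Finset.sum_congr rfl fun j _ => by ring

lemma mem_span_rat_solutions (M : K → n → ℚ) (x : n → ℝ)
    (hx : ∀ k, ∑ j, (M k j : ℝ) * x j = 0) :
    x ∈ Submodule.span ℝ {y : n → ℝ |
      ∃ q : n → ℚ, (∀ k, ∑ j, M k j * q j = 0) ∧ ∀ j, y j = (q j : ℝ)} := by
  classical
  by_contra hmem
  obtain ⟨φ, hφx, hφ0⟩ := Submodule.exists_dual_map_eq_bot_of_notMem hmem inferInstance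
  set S : Set (n → ℝ) := {y : n → ℝ |
      ∃ q : n → ℚ, (∀ k, ∑ j, M k j * q j = 0) ∧ ∀ j, y j = (q j : ℝ)} with hS
  have hvan : ∀ y ∈ S, φ y = 0 := by
    intro y hy
    have : φ y ∈ (Submodule.span ℝ S).map φ := ⟨y, Submodule.subset_span hy, rfl⟩
    rw [hφ0] at this
    simpa using this
  set b := Module.Basis.ofVectorSpace ℚ ℝ with hb
  set w : n → ℝ := fun j => φ (fun i => if j = i then 1 else 0) with hw
  have hφeq : ∀ y : n → ℝ, φ y = ∑ j, y j * w j := by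
    intro y
    simpa [smul_eq_mul, eq_comm, hw] using LinearMap.pi_apply_eq_sum_univ φ y
  set wt : _ → n → ℚ := fun t j => b.repr (w j) t with hwt
  -- each rational row `wt t` vanishes on the rational kernel
  have claim1 : ∀ t, ∀ q : n → ℚ, matLin M q = 0 → rowLin (wt t) q = 0 := by
    intro t q hq
    have hy : (fun j => ((q j : ℝ))) ∈ S := by
      refine ⟨q, fun k => ?_, fun j => rfl⟩
      have := congrFun hq k
      simpa [matLin] using this
    have h1 : ∑ j, q j • w j = 0 := by
      have := hvan _ hy
      rw [hφeq] at this
      simpa [Rat.smul_def] using this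
    have h2 := congrArg (fun r => b.repr r t) h1
    simpa [map_sum, _root_.map_smul, Finsupp.smul_apply, smul_eq_mul, rowLin, hwt,
      mul_comm] using h2
  -- hence `wt t` also kills the real solution `x`
  have claim2 : ∀ t, ∑ j, ((wt t j : ℚ) : ℝ) * x j = 0 := by
    intro t
    obtain ⟨g, hg⟩ := factor_through (matLin M) (rowLin (wt t)) (claim1 t)
    have hgy : ∀ y : K → ℚ, g y = ∑ k, y k * g (fun i => if k = i then 1 else 0) := by
      intro y
      simpa [smul_eq_mul, eq_comm] using LinearMap.pi_apply_eq_sum_univ g y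
    have hrow : ∀ j, wt t j = ∑ k, M k j * g (fun i => if k = i then 1 else 0) := by
      intro j
      have h3 : rowLin (wt t) (fun i => if j = i then 1 else 0) = wt t j := by
        simp [rowLin, mul_ite, Finset.sum_ite_eq]
      rw [← h3, ← hg, hgy]
      refine Finset.sum_congr rfl fun k _ => ?_
      congr 1
      simp [matLin, mul_ite, Finset.sum_ite_eq]
    calc ∑ j, ((wt t j : ℚ) : ℝ) * x j
        = ∑ j, ∑ k, (M k j : ℝ) * (g (fun i => if k = i then 1 else 0) : ℝ) * x j := by
          refine Finset.sum_congr rfl fun j _ => ?_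
          rw [hrow j]
          push_cast
          rw [Finset.sum_mul]
      _ = ∑ k, (g (fun i => if k = i then 1 else 0) : ℝ) * ∑ j, (M k j : ℝ) * x j := by
          rw [Finset.sum_comm]
          refine Finset.sum_congr rfl fun k _ => ?_
          rw [Finset.mul_sum]
          exact Finset.sum_congr rfl fun j _ => by ring
      _ = 0 := by simp [hx]
  -- conclude `φ x = 0`, a contradiction
  set T : Finset _ := Finset.univ.biUnion (fun j => (b.repr (w j)).support) with hT
  have hwj : ∀ j, w j = ∑ t ∈ T, ((wt t j : ℚ) : ℝ) * b t := by
    intro j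
    conv_lhs => rw [← b.linearCombination_repr (w j)]
    rw [Finsupp.linearCombination_apply,
      Finsupp.sum_of_support_subset (s := T) _ (by
        intro t ht
        refine Finset.mem_biUnion.2 ⟨j, Finset.mem_univ j, ?_⟩
        exact ht) _ (by simp)]
    exact Finset.sum_congr rfl fun t _ => by rw [Rat.smul_def]
  apply hφx
  rw [hφeq]
  calc ∑ j, x j * w j = ∑ j, ∑ t ∈ T, x j * (((wt t j : ℚ) : ℝ) * b t) := by
        refine Finset.sum_congr rfl fun j _ => ?_
        rw [hwj j, Finset.mul_sum]
    _ = ∑ t ∈ T, (∑ j, ((wt t j : ℚ) : ℝ) * x j) * b t := by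
        rw [Finset.sum_comm]
        refine Finset.sum_congr rfl fun t _ => ?_
        rw [Finset.sum_mul]
        exact Finset.sum_congr rfl fun j _ => by ring
    _ = 0 := by simp [claim2]

lemma exists_rat_solution_near (M : K → n → ℚ) (x : n → ℝ)
    (hx : ∀ k, ∑ j, (M k j : ℝ) * x j = 0) {ε : ℝ} (hε : 0 < ε) :
    ∃ q : n → ℚ, (∀ k, ∑ j, M k j * q j = 0) ∧ ∀ j, |(q j : ℝ) - x j| < ε := by
  classical
  have hsp := mem_span_rat_solutions M x hx
  rw [Submodule.mem_span_set] at hsp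
  obtain ⟨l, hls, hlx⟩ := hsp
  have hmem : ∀ y ∈ l.support, ∃ q : n → ℚ,
      (∀ k, ∑ j, M k j * q j = 0) ∧ ∀ j, y j = (q j : ℝ) := fun y hy => hls hy
  choose! Q hQ1 hQ2 using hmem
  set D : ℝ := ∑ y ∈ l.support, ∑ j, |y j| with hD
  have hD0 : 0 ≤ D := Finset.sum_nonneg fun y _ =>
    Finset.sum_nonneg fun j _ => abs_nonneg _
  set δ : ℝ := ε / (D + 1) with hδ
  have hδ0 : 0 < δ := div_pos hε (by linarith)
  choose ρ hρ using fun y : n → ℝ => exists_rat_near (K := ℝ) (l y) hδ0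
  refine ⟨fun j => ∑ y ∈ l.support, ρ y * Q y j, fun k => ?_, fun j => ?_⟩
  · calc ∑ j, M k j * ∑ y ∈ l.support, ρ y * Q y j
        = ∑ j, ∑ y ∈ l.support, ρ y * (M k j * Q y j) := by
          refine Finset.sum_congr rfl fun j _ => ?_
          rw [Finset.mul_sum]
          exact Finset.sum_congr rfl fun y _ => by ring
      _ = ∑ y ∈ l.support, ρ y * ∑ j, M k j * Q y j := by
          rw [Finset.sum_comm]
          exact Finset.sum_congr rfl fun y _ => (Finset.mul_sum _ _ _).symm
      _ = 0 := Finset.sum_eq_zero fun y hy => by rw [hQ1 y hy k, mul_zero]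
  · have hxj : x j = ∑ y ∈ l.support, l y * y j := by
      have h1 := congrFun hlx j
      rw [Finsupp.sum] at h1
      simpa [Finset.sum_apply, smul_eq_mul] using h1.symm
    have hqj : ((∑ y ∈ l.support, ρ y * Q y j : ℚ) : ℝ)
        = ∑ y ∈ l.support, (ρ y : ℝ) * y j := by
      push_cast
      exact Finset.sum_congr rfl fun y hy => by rw [← hQ2 y hy j]
    rw [hqj, hxj, ← Finset.sum_sub_distrib]
    have hδε : δ * (D + 1) = ε := by
      rw [hδ, div_mul_cancel₀]
      linarith
    calc |∑ y ∈ l.support, ((ρ y : ℝ) * y j - l y * y j)|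
        ≤ ∑ y ∈ l.support, |(ρ y : ℝ) - l y| * |y j| := by
          refine (Finset.abs_sum_le_sum_abs _ _).trans ?_
          refine Finset.sum_le_sum fun y _ => ?_
          rw [← sub_mul, abs_mul]
      _ ≤ ∑ y ∈ l.support, δ * |y j| := by
          refine Finset.sum_le_sum fun y _ => ?_
          refine mul_le_mul_of_nonneg_right ?_ (abs_nonneg _)
          rw [abs_sub_comm]
          exact (hρ y).le
      _ ≤ δ * D := by
          rw [← Finset.mul_sum]
          refine mul_le_mul_of_nonneg_left ?_ hδ0.le
          refine Finset.sum_le_sum fun y _ => ?_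
          exact Finset.single_le_sum (f := fun j' => |y j'|)
            (fun _ _ => abs_nonneg _) (Finset.mem_univ j)
      _ < ε := by
          rw [← hδε]
          exact mul_lt_mul_of_pos_left (by linarith) hδ0

end Density

section Core

lemma exists_perm_of_fiber_card_eq {ℓ : ℕ} {Y : Type*} [DecidableEq Y] (f g : Fin ℓ → Y)
    (h : ∀ v, (Finset.univ.filter (fun j => f j = v)).card
      = (Finset.univ.filter (fun j => g j = v)).card) :
    ∃ σ : Equiv.Perm (Fin ℓ), ∀ j, f (σ j) = g j := by
  classical
  have h' : ∀ v, Fintype.card {j // g j = v} = Fintype.card {j // f j = v} := by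
    intro v
    rw [Fintype.card_subtype, Fintype.card_subtype, h v]
  let e : ∀ v, {j // g j = v} ≃ {j // f j = v} := fun v => Fintype.equivOfCardEq (h' v)
  exact ⟨Equiv.ofFiberEquiv e, fun j => Equiv.ofFiberEquiv_map e j⟩

lemma fiber_count {P : Type*} [Fintype P] {Y : Type*} [DecidableEq Y] {ℓ : ℕ} (C : P → ℕ)
    (e : ((p : P) × Fin (C p)) ≃ Fin ℓ) (φ : P → Y) (v : Y) :
    (Finset.univ.filter (fun j => φ (e.symm j).1 = v)).card
      = ∑ p ∈ Finset.univ.filter (fun p => φ p = v), C p := by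
  classical
  rw [← Fintype.card_subtype]
  rw [Fintype.card_congr (Equiv.subtypeEquiv e.symm
    (fun j => Iff.rfl) : {j : Fin ℓ // φ (e.symm j).1 = v} ≃ {s // φ s.1 = v})]
  rw [Fintype.card_subtype, Finset.card_filter, ← Finset.univ_sigma_univ,
    Finset.sum_sigma, Finset.sum_filter]
  simp [apply_ite Finset.card]

lemma core_nat {X : Type*} [Fintype X] [DecidableEq X] {N : ℕ} (hN : 0 < N)
    (c : (Fin N → X) → ℝ) (S : (Fin N → X) → Prop)
    (hm : ∀ (ℓ : ℕ) (σ : Fin N → Equiv.Perm (Fin ℓ)) (x : Fin ℓ → Fin N → X),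
      (∀ j, S (x j)) → ∑ j, c (x j) ≤ ∑ j, c (fun i => x (σ i j) i))
    (A B : (Fin N → X) → ℕ) (hS : ∀ p, A p ≠ 0 → S p)
    (hmarg : ∀ (i : Fin N) (v : X),
      ∑ p ∈ Finset.univ.filter (fun p => p i = v), A p
        = ∑ p ∈ Finset.univ.filter (fun p => p i = v), B p) :
    ∑ p, (A p : ℝ) * c p ≤ ∑ p, (B p : ℝ) * c p := by
  classical
  have i0 : Fin N := ⟨0, hN⟩
  have htotgen : ∀ C : (Fin N → X) → ℕ,
      ∑ v, ∑ p ∈ Finset.univ.filter (fun p => p i0 = v), C p = ∑ p, C p := by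
    intro C
    have h := Finset.sum_fiberwise_eq_sum_filter Finset.univ Finset.univ
      (fun p : Fin N → X => p i0) C
    simpa using h
  have htot : ∑ p, A p = ∑ p, B p := by
    rw [← htotgen A, ← htotgen B]
    exact Finset.sum_congr rfl fun v _ => hmarg i0 v
  set ℓ := ∑ p, A p with hℓ
  have hcA : Fintype.card ((p : Fin N → X) × Fin (A p)) = ℓ := by
    simp [Fintype.card_sigma, hℓ]
  have hcB : Fintype.card ((p : Fin N → X) × Fin (B p)) = ℓ := by
    rw [Fintype.card_sigma]
    simp only [Fintype.card_fin]
    exact htot.symm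
  let eA := Fintype.equivFinOfCardEq hcA
  let eB := Fintype.equivFinOfCardEq hcB
  let xs : Fin ℓ → Fin N → X := fun j => (eA.symm j).1
  let ys : Fin ℓ → Fin N → X := fun j => (eB.symm j).1
  have hxsS : ∀ j, S (xs j) := fun j =>
    hS _ (Nat.pos_iff_ne_zero.mp (eA.symm j).2.pos)
  have hfib : ∀ (i : Fin N) (v : X),
      (Finset.univ.filter (fun j => xs j i = v)).card
        = (Finset.univ.filter (fun j => ys j i = v)).card := by
    intro i v
    rw [fiber_count A eA (fun p => p i) v, fiber_count B eB (fun p => p i) v]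
    exact hmarg i v
  choose σ hσ using fun i : Fin N =>
    exists_perm_of_fiber_card_eq (fun j => xs j i) (fun j => ys j i) (hfib i)
  have key := hm ℓ σ xs hxsS
  have hrhs : ∀ j, (fun i => xs (σ i j) i) = ys j := fun j => funext fun i => hσ i j
  have hsum : ∀ (C : (Fin N → X) → ℕ) (e : ((p : Fin N → X) × Fin (C p)) ≃ Fin ℓ),
      ∑ j, c ((e.symm j).1) = ∑ p, (C p : ℝ) * c p := by
    intro C e
    rw [Equiv.sum_comp e.symm (fun s => c s.1), ← Finset.univ_sigma_univ,
      Finset.sum_sigma]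
    simp [Finset.sum_const, mul_comm, nsmul_eq_mul]
  calc ∑ p, (A p : ℝ) * c p = ∑ j, c (xs j) := (hsum A eA).symm
    _ ≤ ∑ j, c (fun i => xs (σ i j) i) := key
    _ = ∑ j, c (ys j) := Finset.sum_congr rfl fun j _ => by rw [hrhs j]
    _ = ∑ p, (B p : ℝ) * c p := hsum B eB

lemma core_rat {X : Type*} [Fintype X] [DecidableEq X] {N : ℕ} (hN : 0 < N)
    (c : (Fin N → X) → ℝ) (S : (Fin N → X) → Prop)
    (hm : ∀ (ℓ : ℕ) (σ : Fin N → Equiv.Perm (Fin ℓ)) (x : Fin ℓ → Fin N → X),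
      (∀ j, S (x j)) → ∑ j, c (x j) ≤ ∑ j, c (fun i => x (σ i j) i))
    (A B : (Fin N → X) → ℚ) (hA0 : ∀ p, 0 ≤ A p) (hB0 : ∀ p, 0 ≤ B p)
    (hS : ∀ p, A p ≠ 0 → S p)
    (hmarg : ∀ (i : Fin N) (v : X),
      ∑ p ∈ Finset.univ.filter (fun p => p i = v), A p
        = ∑ p ∈ Finset.univ.filter (fun p => p i = v), B p) :
    ∑ p, (A p : ℝ) * c p ≤ ∑ p, (B p : ℝ) * c p := by
  classical
  set d : ℕ := (∏ p, (A p).den) * (∏ p, (B p).den) with hd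
  have hd0 : 0 < d := Nat.mul_pos
    (Finset.prod_pos fun p _ => (A p).pos)
    (Finset.prod_pos fun p _ => (B p).pos)
  have hint : ∀ q : ℚ, 0 ≤ q → q.den ∣ d → ∃ m : ℕ, (m : ℚ) = d * q := by
    intro q h0 hdvd
    refine ⟨(d / q.den) * q.num.toNat, ?_⟩
    have h1 : ((q.num.toNat : ℤ)) = q.num := Int.toNat_of_nonneg (Rat.num_nonneg.2 h0)
    have h2 : ((d / q.den : ℕ) : ℚ) = (d : ℚ) / (q.den : ℚ) :=
      Nat.cast_div hdvd (by exact_mod_cast q.pos.ne')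
    have h3 : ((q.num.toNat : ℕ) : ℚ) = (q.num : ℚ) := by exact_mod_cast congrArg Int.cast h1
    calc ((d / q.den * q.num.toNat : ℕ) : ℚ)
        = ((d : ℚ) / q.den) * (q.num : ℚ) := by rw [Nat.cast_mul, h2, h3]
      _ = d * q := by
          conv_rhs => rw [← Rat.num_div_den q]
          ring
  choose MA hMA using fun p => hint (A p) (hA0 p)
    (dvd_mul_of_dvd_left (Finset.dvd_prod_of_mem _ (Finset.mem_univ p)) _)
  choose MB hMB using fun p => hint (B p) (hB0 p)
    (dvd_mul_of_dvd_right (Finset.dvd_prod_of_mem _ (Finset.mem_univ p)) _)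
  have hS' : ∀ p, MA p ≠ 0 → S p := by
    intro p h
    refine hS p fun hA => h ?_
    have h4 := hMA p
    rw [hA, mul_zero] at h4
    exact_mod_cast h4
  have hmargN : ∀ (i : Fin N) (v : X),
      ∑ p ∈ Finset.univ.filter (fun p => p i = v), MA p
        = ∑ p ∈ Finset.univ.filter (fun p => p i = v), MB p := by
    intro i v
    have : ((∑ p ∈ Finset.univ.filter (fun p => p i = v), MA p : ℕ) : ℚ)
        = ((∑ p ∈ Finset.univ.filter (fun p => p i = v), MB p : ℕ) : ℚ) := by
      rw [Nat.cast_sum, Nat.cast_sum]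
      simp_rw [hMA, hMB]
      rw [← Finset.mul_sum, ← Finset.mul_sum, hmarg i v]
    exact_mod_cast this
  have key := core_nat hN c S hm MA MB hS' hmargN
  have hcastA : ∀ p, ((MA p : ℝ)) = (d : ℝ) * (A p : ℝ) := by
    intro p
    have h5 := congrArg (fun q : ℚ => (q : ℝ)) (hMA p)
    push_cast at h5
    exact h5
  have hcastB : ∀ p, ((MB p : ℝ)) = (d : ℝ) * (B p : ℝ) := by
    intro p
    have h5 := congrArg (fun q : ℚ => (q : ℝ)) (hMB p)
    push_cast at h5
    exact h5
  have key2 : (d : ℝ) * ∑ p, (A p : ℝ) * c p ≤ (d : ℝ) * ∑ p, (B p : ℝ) * c p := by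
    rw [Finset.mul_sum, Finset.mul_sum]
    calc ∑ p, (d : ℝ) * ((A p : ℝ) * c p) = ∑ p, (MA p : ℝ) * c p := by
          refine Finset.sum_congr rfl fun p _ => ?_
          rw [hcastA p, mul_assoc]
      _ ≤ ∑ p, (MB p : ℝ) * c p := key
      _ = ∑ p, (d : ℝ) * ((B p : ℝ) * c p) := by
          refine Finset.sum_congr rfl fun p _ => ?_
          rw [hcastB p, mul_assoc]
  exact le_of_mul_le_mul_left key2 (by exact_mod_cast hd0)

end Core


open Filter Topology

theorem stmt7 (X : Type*) [Fintype X] [MeasurableSpace X] [MeasurableSingletonClass X]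
    (N : ℕ) (hN : 2 ≤ N) (c : (Fin N → X) → ℝ)
    (γ : Measure (Fin N → X)) [IsProbabilityMeasure γ]
    (hmono : ∀ (ℓ : ℕ) (σ : Fin N → Equiv.Perm (Fin ℓ)) (x : Fin ℓ → Fin N → X),
      (∀ j, γ {x j} ≠ 0) →
      ∑ j, c (x j) ≤ ∑ j, c (fun i => x (σ i j) i)) :
    ∀ γ' : Measure (Fin N → X), IsProbabilityMeasure γ' →
      (∀ i : Fin N, Measure.map (fun p => p i) γ' = Measure.map (fun p => p i) γ) →
      ∫ x, c x ∂γ ≤ ∫ x, c x ∂γ' := by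
  classical
  intro γ' hγ' hmarg
  have hNpos : 0 < N := lt_of_lt_of_le two_pos hN
  set a : (Fin N → X) → ℝ := fun p => (γ {p}).toReal with ha
  set b : (Fin N → X) → ℝ := fun p => (γ' {p}).toReal with hb
  have hInt : ∀ (μ : Measure (Fin N → X)), IsProbabilityMeasure μ →
      ∫ x, c x ∂μ = ∑ p, (μ {p}).toReal * c p := by
    intro μ hμ
    rw [integral_fintype (f := c) .of_finite]
    simp [smul_eq_mul, Measure.real]
  -- marginal sums agree
  have hmargsum : ∀ (i : Fin N) (v : X),
      ∑ p ∈ Finset.univ.filter (fun p => p i = v), a p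
        = ∑ p ∈ Finset.univ.filter (fun p => p i = v), b p := by
    intro i v
    have hms : MeasurableSet ((fun p : Fin N → X => p i) ⁻¹' {v}) :=
      (measurable_pi_apply i) (measurableSet_singleton v)
    have h3 : Measure.map (fun p : Fin N → X => p i) γ' {v}
        = Measure.map (fun p => p i) γ {v} := by rw [hmarg i]
    rw [Measure.map_apply (measurable_pi_apply i) (measurableSet_singleton v),
      Measure.map_apply (measurable_pi_apply i) (measurableSet_singleton v)] at h3
    have hset : ∀ μ : Measure (Fin N → X), μ ((fun p : Fin N → X => p i) ⁻¹' {v})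
        = ∑ p ∈ Finset.univ.filter (fun p => p i = v), μ {p} := by
      intro μ
      rw [show (fun p : Fin N → X => p i) ⁻¹' {v}
          = ⋃ p ∈ (Finset.univ.filter (fun p : Fin N → X => p i = v)), {p} from by
        ext q; simp]
      rw [measure_biUnion_finset (fun p _ q _ hpq => Set.disjoint_singleton.mpr hpq)
        (fun p _ => measurableSet_singleton p)]
    have h4 : (γ ((fun p : Fin N → X => p i) ⁻¹' {v})).toReal
        = (γ' ((fun p : Fin N → X => p i) ⁻¹' {v})).toReal := by rw [h3]
    rw [hset γ, hset γ', ENNReal.toReal_sum (fun p _ => measure_ne_top γ _),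
      ENNReal.toReal_sum (fun p _ => measure_ne_top γ' _)] at h4
    exact h4
  -- set up the rational linear system
  set n : Type _ := (Fin N → X) ⊕ (Fin N → X) with hn
  set K : Type _ := (Fin N × X) ⊕ ((Fin N → X) ⊕ (Fin N → X)) with hK
  set x : n → ℝ := Sum.elim a b with hx
  set M : K → n → ℚ := fun k s =>
    match k, s with
    | Sum.inl (i, v), Sum.inl p => if p i = v then 1 else 0
    | Sum.inl (i, v), Sum.inr p => if p i = v then -1 else 0
    | Sum.inr (Sum.inl p0), s => if γ {p0} = 0 ∧ s = Sum.inl p0 then 1 else 0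
    | Sum.inr (Sum.inr p0), s => if γ' {p0} = 0 ∧ s = Sum.inr p0 then 1 else 0
    with hM
  have hxsol : ∀ k, ∑ s, (M k s : ℝ) * x s = 0 := by
    rintro (⟨i, v⟩ | (p0 | p0))
    · rw [Fintype.sum_sum_type]
      have e1 : ∀ p : Fin N → X,
          ((M (Sum.inl (i, v)) (Sum.inl p) : ℚ) : ℝ) * x (Sum.inl p)
            = if p i = v then a p else 0 := by
        intro p
        simp only [hM, hx]
        split <;> simp
      have e2 : ∀ p : Fin N → X,
          ((M (Sum.inl (i, v)) (Sum.inr p) : ℚ) : ℝ) * x (Sum.inr p)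
            = if p i = v then -(b p) else 0 := by
        intro p
        simp only [hM, hx]
        split <;> simp
      simp_rw [e1, e2]
      rw [← Finset.sum_filter, ← Finset.sum_filter, hmargsum i v]
      simp [Finset.sum_neg_distrib]
    · by_cases h : γ {p0} = 0
      · have e1 : ∀ s : n, ((M (Sum.inr (Sum.inl p0)) s : ℚ) : ℝ) * x s
            = if s = Sum.inl p0 then x s else 0 := by
          intro s
          simp only [hM, h, true_and]
          split <;> simp
        simp_rw [e1]
        rw [Finset.sum_ite_eq' Finset.univ (Sum.inl p0) x]
        simp [hx, ha, h]
      · have e1 : ∀ s : n, ((M (Sum.inr (Sum.inl p0)) s : ℚ) : ℝ) * x s = 0 := by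
          intro s
          simp only [hM, h, false_and]
          simp
        simp [e1]
    · by_cases h : γ' {p0} = 0
      · have e1 : ∀ s : n, ((M (Sum.inr (Sum.inr p0)) s : ℚ) : ℝ) * x s
            = if s = Sum.inr p0 then x s else 0 := by
          intro s
          simp only [hM, h, true_and]
          split <;> simp
        simp_rw [e1]
        rw [Finset.sum_ite_eq' Finset.univ (Sum.inr p0) x]
        simp [hx, hb, h]
      · have e1 : ∀ s : n, ((M (Sum.inr (Sum.inr p0)) s : ℚ) : ℝ) * x s = 0 := by
          intro s
          simp only [hM, h, false_and]
          simp
        simp [e1]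
  -- rational approximations
  have happrox : ∀ m : ℕ, ∃ q : n → ℚ, (∀ k, ∑ s, M k s * q s = 0) ∧
      ∀ s, |(q s : ℝ) - x s| < 1 / (m + 1) :=
    fun m => exists_rat_solution_near M x hxsol (by positivity)
  choose u hu1 hu2 using happrox
  -- coordinatewise convergence
  have ts : ∀ s : n, Tendsto (fun m => ((u m s : ℝ))) atTop (𝓝 (x s)) := by
    intro s
    have h0 : Tendsto (fun m : ℕ => ((u m s : ℝ)) - x s) atTop (𝓝 0) := by
      apply squeeze_zero_norm (fun m => (hu2 m s).le)
      exact tendsto_one_div_add_atTop_nhds_zero_nat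
    have h1 := h0.add_const (x s)
    simpa using h1
  -- zero coordinates are exactly zero
  have hzeroA : ∀ m, ∀ p : Fin N → X, γ {p} = 0 → u m (Sum.inl p) = 0 := by
    intro m p h
    have h1 := hu1 m (Sum.inr (Sum.inl p))
    have e1 : ∀ s : n, M (Sum.inr (Sum.inl p)) s * u m s
        = if s = Sum.inl p then u m s else 0 := by
      intro s
      simp only [hM, h, true_and]
      split <;> simp
    rw [Fintype.sum_congr _ _ e1, Finset.sum_ite_eq' Finset.univ (Sum.inl p) (u m)] at h1
    simpa using h1
  have hzeroB : ∀ m, ∀ p : Fin N → X, γ' {p} = 0 → u m (Sum.inr p) = 0 := by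
    intro m p h
    have h1 := hu1 m (Sum.inr (Sum.inr p))
    have e1 : ∀ s : n, M (Sum.inr (Sum.inr p)) s * u m s
        = if s = Sum.inr p then u m s else 0 := by
      intro s
      simp only [hM, h, true_and]
      split <;> simp
    rw [Fintype.sum_congr _ _ e1, Finset.sum_ite_eq' Finset.univ (Sum.inr p) (u m)] at h1
    simpa using h1
  -- eventual nonnegativity
  have hposev : ∀ᶠ m in atTop, ∀ s : n, 0 < x s → 0 < u m s := by
    rw [eventually_all]
    intro s
    by_cases h : 0 < x s
    · filter_upwards [(ts s).eventually (eventually_gt_nhds h)] with m hm _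
      exact_mod_cast hm
    · filter_upwards with m hm
      exact absurd hm h
  -- the eventual inequality
  have hev : ∀ᶠ m in atTop,
      ∑ p, ((u m (Sum.inl p) : ℝ)) * c p ≤ ∑ p, ((u m (Sum.inr p) : ℝ)) * c p := by
    filter_upwards [hposev] with m hm
    have hA0 : ∀ p, 0 ≤ u m (Sum.inl p) := by
      intro p
      by_cases h : γ {p} = 0
      · rw [hzeroA m p h]
      · have : 0 < x (Sum.inl p) := by
          simp only [hx, Sum.elim_inl, ha]
          exact ENNReal.toReal_pos h (measure_ne_top γ _)
        exact_mod_cast (hm _ this).le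
    have hB0 : ∀ p, 0 ≤ u m (Sum.inr p) := by
      intro p
      by_cases h : γ' {p} = 0
      · rw [hzeroB m p h]
      · have : 0 < x (Sum.inr p) := by
          simp only [hx, Sum.elim_inr, hb]
          exact ENNReal.toReal_pos h (measure_ne_top γ' _)
        exact_mod_cast (hm _ this).le
    have hSsupp : ∀ p, u m (Sum.inl p) ≠ 0 → γ {p} ≠ 0 := by
      intro p h hγ0
      exact h (hzeroA m p hγ0)
    have hmargQ : ∀ (i : Fin N) (v : X),
        ∑ p ∈ Finset.univ.filter (fun p => p i = v), u m (Sum.inl p)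
          = ∑ p ∈ Finset.univ.filter (fun p => p i = v), u m (Sum.inr p) := by
      intro i v
      have h1 := hu1 m (Sum.inl (i, v))
      rw [Fintype.sum_sum_type] at h1
      have e1 : ∀ p : Fin N → X, M (Sum.inl (i, v)) (Sum.inl p) * u m (Sum.inl p)
          = if p i = v then u m (Sum.inl p) else 0 := by
        intro p
        simp only [hM]
        split <;> simp
      have e2 : ∀ p : Fin N → X, M (Sum.inl (i, v)) (Sum.inr p) * u m (Sum.inr p)
          = if p i = v then -(u m (Sum.inr p)) else 0 := by
        intro p
        simp only [hM]
        split <;> simp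
      simp_rw [e1, e2] at h1
      rw [← Finset.sum_filter, ← Finset.sum_filter, Finset.sum_neg_distrib] at h1
      linarith
    exact core_rat hNpos c (fun p => γ {p} ≠ 0) hmono
      (fun p => u m (Sum.inl p)) (fun p => u m (Sum.inr p)) hA0 hB0 hSsupp hmargQ
  -- pass to the limit
  have hlimA : Tendsto (fun m => ∑ p, ((u m (Sum.inl p) : ℝ)) * c p) atTop
      (𝓝 (∑ p, a p * c p)) := by
    apply tendsto_finset_sum
    intro p _
    exact (ts (Sum.inl p)).mul_const _
  have hlimB : Tendsto (fun m => ∑ p, ((u m (Sum.inr p) : ℝ)) * c p) atTop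
      (𝓝 (∑ p, b p * c p)) := by
    apply tendsto_finset_sum
    intro p _
    exact (ts (Sum.inr p)).mul_const _
  have hfin : ∑ p, a p * c p ≤ ∑ p, b p * c p :=
    le_of_tendsto_of_tendsto hlimA hlimB hev
  rw [hInt γ inferInstance, hInt γ' hγ']
  exact hfin
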